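/- For every m ∈ ℕ, the function s(x,y,q) = i q e^{−q²/2}(x+iy)^{m+1}, which equals X_s applied to e^{−q²/2}(x+iy)^m where X_s = y∂_q + i x q, satisfies the symplectic twistor equation T_s s = 0 with T_s = ∂_x − q ∂_q ∂_x + i q² ∂_y. -/

import Mathlib

noncomputable section

def px (f : ℝ → ℝ → ℝ → ℂ) : ℝ → ℝ → ℝ → ℂ := fun x y q => deriv (fun t => f t y q) x
def py (f : ℝ → ℝ → ℝ → ℂ) : ℝ → ℝ → ℝ → ℂ := fun x y q => deriv (fun t => f x t q) y
def pq (f : ℝ → ℝ → ℝ → ℂ) : ℝ → ℝ → ℝ → ℂ := fun x y q => deriv (fun t => f x y t) q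

/-- X_s = y ∂_q + i x q -/
def Xs (f : ℝ → ℝ → ℝ → ℂ) : ℝ → ℝ → ℝ → ℂ :=
  fun x y q => (y : ℂ) * pq f x y q + Complex.I * x * q * f x y q

/-- D_s = i q ∂_y − ∂_x ∂_q -/
def Ds (f : ℝ → ℝ → ℝ → ℂ) : ℝ → ℝ → ℝ → ℂ :=
  fun x y q => Complex.I * q * py f x y q - px (pq f) x y q

/-- T_s = ∂_x − q ∂_q ∂_x + i q² ∂_y -/
def Ts (f : ℝ → ℝ → ℝ → ℂ) : ℝ → ℝ → ℝ → ℂ :=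
  fun x y q => px f x y q - (q : ℂ) * pq (px f) x y q + Complex.I * q ^ 2 * py f x y q

lemma hE (q : ℝ) : HasDerivAt (fun t : ℝ => Complex.exp (-(t : ℂ) ^ 2 / 2))
    (-(q : ℂ) * Complex.exp (-(q : ℂ) ^ 2 / 2)) q := by
  have h1 : HasDerivAt (fun z : ℂ => Complex.exp (-z ^ 2 / 2))
      (-(q : ℂ) * Complex.exp (-(q : ℂ) ^ 2 / 2)) (q : ℂ) := by
    have h2 : HasDerivAt (fun z : ℂ => -z ^ 2 / 2) (-(q : ℂ)) (q : ℂ) := by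
      have := (((hasDerivAt_id (q : ℂ)).fun_pow 2).neg.div_const 2)
      exact this.congr_deriv (by norm_num; ring)
    simpa [mul_comm] using h2.cexp
  exact h1.comp_ofReal

lemma hZx (m : ℕ) (x y : ℝ) : HasDerivAt (fun t : ℝ => ((t : ℂ) + Complex.I * y) ^ m)
    (m * ((x : ℂ) + Complex.I * y) ^ (m - 1)) x := by
  have h1 : HasDerivAt (fun z : ℂ => (z + Complex.I * y) ^ m)
      (m * ((x : ℂ) + Complex.I * y) ^ (m - 1)) (x : ℂ) := by
    simpa using (((hasDerivAt_id ((x : ℂ))).add_const (Complex.I * y)).fun_pow m)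
  exact h1.comp_ofReal

lemma hZy (m : ℕ) (x y : ℝ) : HasDerivAt (fun t : ℝ => ((x : ℂ) + Complex.I * t) ^ m)
    (m * ((x : ℂ) + Complex.I * y) ^ (m - 1) * Complex.I) y := by
  have h1 : HasDerivAt (fun z : ℂ => ((x : ℂ) + Complex.I * z) ^ m)
      (m * ((x : ℂ) + Complex.I * (y : ℂ)) ^ (m - 1) * Complex.I) (y : ℂ) := by
    have h2 : HasDerivAt (fun z : ℂ => ((x : ℂ) + Complex.I * z)) Complex.I (y : ℂ) := by
      simpa using (((hasDerivAt_id ((y : ℂ))).const_mul Complex.I).const_add (x : ℂ))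
    simpa using (h2.fun_pow m)
  exact h1.comp_ofReal

lemma hT (q : ℝ) : HasDerivAt (fun t : ℝ => (t : ℂ)) 1 q := by
  simpa using (hasDerivAt_id (q : ℂ)).comp_ofReal

theorem Ts_annihilates_Xs_monogenic (m : ℕ) (x y q : ℝ) :
    (Complex.I * q * Complex.exp (-(q : ℂ) ^ 2 / 2) * ((x : ℂ) + Complex.I * y) ^ (m + 1)
      = Xs (fun x y q => Complex.exp (-(q : ℂ) ^ 2 / 2) * ((x : ℂ) + Complex.I * y) ^ m)
          x y q) ∧
    Ts (fun x y q =>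
        Complex.I * q * Complex.exp (-(q : ℂ) ^ 2 / 2) * ((x : ℂ) + Complex.I * y) ^ (m + 1))
      x y q = 0 := by
  have hI : (Complex.I : ℂ) ^ 2 = -1 := Complex.I_sq
  constructor
  · show _ = (y : ℂ) * deriv (fun t : ℝ =>
        Complex.exp (-(t : ℂ) ^ 2 / 2) * ((x : ℂ) + Complex.I * y) ^ m) q + _
    rw [((hE q).mul_const (((x : ℂ) + Complex.I * y) ^ m)).deriv]
    linear_combination ((q : ℂ) * (y : ℂ) * Complex.exp (-(q : ℂ) ^ 2 / 2)
      * ((x : ℂ) + Complex.I * y) ^ m) * hI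
  · have hpx : ∀ t : ℝ, px (fun x y q =>
        Complex.I * q * Complex.exp (-(q : ℂ) ^ 2 / 2) * ((x : ℂ) + Complex.I * y) ^ (m + 1))
        x y t = Complex.I * t * Complex.exp (-(t : ℂ) ^ 2 / 2)
          * (((m : ℂ) + 1) * ((x : ℂ) + Complex.I * y) ^ m) := by
      intro t
      show deriv (fun s : ℝ => Complex.I * (t : ℂ) * Complex.exp (-(t : ℂ) ^ 2 / 2)
          * ((s : ℂ) + Complex.I * y) ^ (m + 1)) x = _
      rw [((hZx (m + 1) x y).const_mul
        (Complex.I * (t : ℂ) * Complex.exp (-(t : ℂ) ^ 2 / 2))).deriv]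
      push_cast
      ring
    have hpy : py (fun x y q =>
        Complex.I * q * Complex.exp (-(q : ℂ) ^ 2 / 2) * ((x : ℂ) + Complex.I * y) ^ (m + 1))
        x y q = Complex.I * (q : ℂ) * Complex.exp (-(q : ℂ) ^ 2 / 2)
          * (((m : ℂ) + 1) * ((x : ℂ) + Complex.I * y) ^ m * Complex.I) := by
      show deriv (fun t : ℝ => Complex.I * (q : ℂ) * Complex.exp (-(q : ℂ) ^ 2 / 2)
          * ((x : ℂ) + Complex.I * t) ^ (m + 1)) y = _
      rw [((hZy (m + 1) x y).const_mul
        (Complex.I * (q : ℂ) * Complex.exp (-(q : ℂ) ^ 2 / 2))).deriv]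
      push_cast
      ring
    have hpq : pq (px (fun x y q =>
        Complex.I * q * Complex.exp (-(q : ℂ) ^ 2 / 2) * ((x : ℂ) + Complex.I * y) ^ (m + 1)))
        x y q = Complex.I * (1 - (q : ℂ) ^ 2) * Complex.exp (-(q : ℂ) ^ 2 / 2)
          * (((m : ℂ) + 1) * ((x : ℂ) + Complex.I * y) ^ m) := by
      have hfun : (fun t : ℝ => px (fun x y q =>
          Complex.I * q * Complex.exp (-(q : ℂ) ^ 2 / 2) * ((x : ℂ) + Complex.I * y) ^ (m + 1))
          x y t) = fun t : ℝ => Complex.I * t * Complex.exp (-(t : ℂ) ^ 2 / 2)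
            * (((m : ℂ) + 1) * ((x : ℂ) + Complex.I * y) ^ m) := funext hpx
      show deriv (fun t : ℝ => px _ x y t) q = _
      rw [hfun]
      have hd : HasDerivAt (fun t : ℝ => Complex.I * (t : ℂ) * Complex.exp (-(t : ℂ) ^ 2 / 2)
          * (((m : ℂ) + 1) * ((x : ℂ) + Complex.I * y) ^ m))
          ((Complex.I * 1 * Complex.exp (-(q : ℂ) ^ 2 / 2)
            + Complex.I * (q : ℂ) * (-(q : ℂ) * Complex.exp (-(q : ℂ) ^ 2 / 2)))
            * (((m : ℂ) + 1) * ((x : ℂ) + Complex.I * y) ^ m)) q :=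
        (((hT q).const_mul Complex.I).mul (hE q)).mul_const _
      rw [hd.deriv]
      ring
    show px _ x y q - (q : ℂ) * pq (px _) x y q + Complex.I * (q : ℝ) ^ 2 * py _ x y q = 0
    rw [hpx q, hpy, hpq]
    linear_combination (Complex.I * (q : ℂ) ^ 3 * Complex.exp (-(q : ℂ) ^ 2 / 2)
      * (((m : ℂ) + 1) * ((x : ℂ) + Complex.I * y) ^ m)) * hI
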